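/- Lemma, Part a (closed form for the Neville-elimination matrices): For every stage 2 ≤ s ≤ n and all indices s ≤ i, j ≤ n, the stage-s matrix of the Neville elimination of V satisfies U(s)_{i,j} = σ² η^{(i−j)²} · (∏_{x=1}^{s−1} (1 − η^{2(j−x)})) · Σ, where Σ is the nested sum ∑_{k=0}^{i−s} ∑_{k₁=0}^{k} ∑_{k₂=0}^{k₁} ⋯ ∑_{k_{s−2}=0}^{k_{s−3}} η^{2(k(j−s) + k + k₁ + ⋯ + k_{s−2})} over (s−1)-tuples (k, k₁, …, k_{s−2}) (for s = 2 the sum is ∑_{k=0}^{i−2} η^{2(k(j−2)+k)}). -/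
import Mathlib


/-- The Gaussian-covariance kernel on 1-based indices:
`V σ θ δ i j = σ² e^{-θ (i-j)² δ²}`. -/
noncomputable def gaussV (σ θ δ : ℝ) (i j : ℕ) : ℝ :=
  σ ^ 2 * Real.exp (-θ * ((i : ℝ) - (j : ℝ)) ^ 2 * δ ^ 2)

/-- `nevilleU σ θ δ t` is the stage-`(t+1)` matrix `U(t+1)` (on 1-based indices) of the
Neville elimination of the Gaussian-covariance matrix: `U(1) = V`, and `U(s+1)` agrees
with `U(s)` in rows `1, …, s`, while for `i ≥ s + 1` one has `U(s+1)_{i,j} = 0` for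
`j ≤ s` and `U(s+1)_{i,j} = U(s)_{i,j} - U(s)_{i,s} U(s)_{s,j} / U(s)_{s,s}` for
`j ≥ s + 1`. -/
noncomputable def nevilleU (σ θ δ : ℝ) : ℕ → ℕ → ℕ → ℝ
  | 0, i, j => gaussV σ θ δ i j
  | t + 1, i, j =>
    if i ≤ t + 1 then nevilleU σ θ δ t i j
    else if j ≤ t + 1 then 0
    else nevilleU σ θ δ t i j -
      nevilleU σ θ δ t i (t + 1) * nevilleU σ θ δ t (t + 1) j /
        nevilleU σ θ δ t (t + 1) (t + 1)

/-- `chainSum x m top = ∑ x^(k₁+⋯+k_m)` over integer chains `0 ≤ k_m ≤ ⋯ ≤ k₁ ≤ top`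
(for `m = 0` the sum is `1 = x^0`, over the unique empty chain). -/
noncomputable def chainSum (x : ℝ) : ℕ → ℕ → ℝ
  | 0, _ => 1
  | m + 1, top => ∑ v ∈ Finset.range (top + 1), x ^ v * chainSum x m v

noncomputable def Fm (σ η : ℝ) (s i j : ℕ) : ℝ :=
  σ ^ 2 * η ^ (((i : ℤ) - (j : ℤ)) ^ 2) *
    (∏ x ∈ Finset.Icc 1 (s - 1), (1 - η ^ (2 * (j - x)))) *
    (∑ k ∈ Finset.range (i - s + 1),
      (η ^ 2) ^ (k * (j - s) + k) * chainSum (η ^ 2) (s - 2) k)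

lemma chainSum_top_zero (x : ℝ) (m : ℕ) : chainSum x m 0 = 1 := by
  induction m with
  | zero => rfl
  | succ m ih => simp [chainSum, ih]

lemma chainSum_succ_top (x : ℝ) (m a : ℕ) :
    chainSum x (m + 1) (a + 1) =
      chainSum x (m + 1) a + x ^ (a + 1) * chainSum x m (a + 1) := by
  rw [chainSum, chainSum, Finset.sum_range_succ]

lemma keyId (x : ℝ) (m b : ℕ) :
    ∀ a : ℕ, ∑ k ∈ Finset.range (a + 1), x ^ (k * b + k) * chainSum x m k =
      x ^ (a * b) * chainSum x (m + 1) a +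
        (1 - x ^ b) * ∑ k ∈ Finset.range a, x ^ (k * b) * chainSum x (m + 1) k
  | 0 => by simp [chainSum, chainSum_top_zero]
  | a + 1 => by
    rw [Finset.sum_range_succ, keyId x m b a, Finset.sum_range_succ, chainSum_succ_top]
    ring

lemma prod_pos' {η : ℝ} (hη0 : 0 < η) (hη1 : η < 1) (m j : ℕ) (hm : m < j) :
    0 < ∏ x ∈ Finset.Icc 1 m, (1 - η ^ (2 * (j - x))) := by
  apply Finset.prod_pos
  intro x hx
  rw [Finset.mem_Icc] at hx
  have : η ^ (2 * (j - x)) < 1 := pow_lt_one₀ hη0.le hη1 (by omega)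
  linarith

lemma eta_sq {η : ℝ} (hη : η ≠ 0) (s i j : ℕ) (hi : s ≤ i) (hj : s ≤ j) :
    η ^ (((i : ℤ) - s) ^ 2) * η ^ (((s : ℤ) - j) ^ 2) =
      η ^ (((i : ℤ) - j) ^ 2) * (η ^ 2) ^ ((i - s) * (j - s)) := by
  rw [← pow_mul, ← zpow_natCast η (2 * ((i - s) * (j - s))), ← zpow_add₀ hη,
    ← zpow_add₀ hη]
  congr 1
  push_cast [Nat.cast_sub hi, Nat.cast_sub hj]
  ring

lemma Fm_row (σ η : ℝ) (s j : ℕ) :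
    Fm σ η s s j = σ ^ 2 * η ^ (((s : ℤ) - j) ^ 2) *
      ∏ x ∈ Finset.Icc 1 (s - 1), (1 - η ^ (2 * (j - x))) := by
  unfold Fm
  simp [Nat.sub_self, chainSum_top_zero]

lemma Fm_diag (σ η : ℝ) (s : ℕ) :
    Fm σ η s s s = σ ^ 2 * ∏ x ∈ Finset.Icc 1 (s - 1), (1 - η ^ (2 * (s - x))) := by
  rw [Fm_row]
  simp

lemma Fm_col (σ η : ℝ) (s i : ℕ) (h2 : 2 ≤ s) :
    Fm σ η s i s = σ ^ 2 * η ^ (((i : ℤ) - s) ^ 2) *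
      (∏ x ∈ Finset.Icc 1 (s - 1), (1 - η ^ (2 * (s - x)))) *
      chainSum (η ^ 2) (s - 1) (i - s) := by
  unfold Fm
  congr 1
  have h1 : s - 1 = (s - 2) + 1 := by omega
  rw [h1, chainSum]
  apply Finset.sum_congr rfl
  intro k _
  simp [Nat.sub_self]

lemma Fm_step (σ η : ℝ) (hσ : σ ≠ 0) (hη0 : 0 < η) (hη1 : η < 1) {s i j : ℕ}
    (h2 : 2 ≤ s) (hi : s + 1 ≤ i) (hj : s + 1 ≤ j) :
    Fm σ η s i j - Fm σ η s i s * Fm σ η s s j / Fm σ η s s s = Fm σ η (s + 1) i j := by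
  have hη : η ≠ 0 := hη0.ne'
  have hσ2 : σ ^ 2 ≠ 0 := pow_ne_zero _ hσ
  have hPs0 : 0 < ∏ x ∈ Finset.Icc 1 (s - 1), (1 - η ^ (2 * (s - x))) :=
    prod_pos' hη0 hη1 (s - 1) s (by omega)
  rw [Fm_col σ η s i h2, Fm_row σ η s j, Fm_diag σ η s]
  set Ps : ℝ := ∏ x ∈ Finset.Icc 1 (s - 1), (1 - η ^ (2 * (s - x))) with hPsdef
  set P : ℝ := ∏ x ∈ Finset.Icc 1 (s - 1), (1 - η ^ (2 * (j - x))) with hPdef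
  set C : ℝ := chainSum (η ^ 2) (s - 1) (i - s) with hCdef
  have hdiv :
      σ ^ 2 * η ^ (((i : ℤ) - s) ^ 2) * Ps * C * (σ ^ 2 * η ^ (((s : ℤ) - j) ^ 2) * P) /
        (σ ^ 2 * Ps) =
      σ ^ 2 * η ^ (((i : ℤ) - j) ^ 2) * ((η ^ 2) ^ ((i - s) * (j - s)) * C) * P := by
    have key := eta_sq hη s i j (by omega) (by omega)
    rw [div_eq_iff (mul_ne_zero hσ2 hPs0.ne')]
    linear_combination (σ ^ 2 * σ ^ 2 * Ps * C * P) * key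
  rw [hdiv]
  -- Now prove the sum-level identity.
  have hsum :
      (∑ k ∈ Finset.range (i - s + 1),
        (η ^ 2) ^ (k * (j - s) + k) * chainSum (η ^ 2) (s - 2) k) =
      (η ^ 2) ^ ((i - s) * (j - s)) * C +
        (1 - (η ^ 2) ^ (j - s)) *
          ∑ k ∈ Finset.range (i - s), (η ^ 2) ^ (k * (j - s)) * chainSum (η ^ 2) (s - 1) k := by
    have h1 : s - 1 = (s - 2) + 1 := by omega
    rw [hCdef, h1]
    exact keyId (η ^ 2) (s - 2) (j - s) (i - s)
  -- Rewrite the RHS `Fm σ η (s+1) i j` pieces.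
  have hprod : (∏ x ∈ Finset.Icc 1 ((s + 1) - 1), (1 - η ^ (2 * (j - x)))) =
      P * (1 - η ^ (2 * (j - s))) := by
    rw [hPdef]
    have h1 : (s + 1) - 1 = (s - 1) + 1 := by omega
    rw [h1, Finset.prod_Icc_succ_top (by omega), show s - 1 + 1 = s from by omega]
  have hsum2 : (∑ k ∈ Finset.range (i - (s + 1) + 1),
      (η ^ 2) ^ (k * (j - (s + 1)) + k) * chainSum (η ^ 2) ((s + 1) - 2) k) =
      ∑ k ∈ Finset.range (i - s), (η ^ 2) ^ (k * (j - s)) * chainSum (η ^ 2) (s - 1) k := by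
    have h1 : i - (s + 1) + 1 = i - s := by omega
    have h2' : (s + 1) - 2 = s - 1 := by omega
    rw [h1, h2']
    apply Finset.sum_congr rfl
    intro k _
    congr 2
    have : j - s = (j - (s + 1)) + 1 := by omega
    rw [this, Nat.mul_succ]
  unfold Fm
  rw [hprod, hsum2]
  rw [hsum]
  have h2eta : η ^ (2 * (j - s)) = (η ^ 2) ^ (j - s) := by rw [← pow_mul]
  rw [h2eta]
  ring

lemma gaussV_eq (σ θ δ : ℝ) (i j : ℕ) :
    gaussV σ θ δ i j = σ ^ 2 * Real.exp (-θ * δ ^ 2) ^ (((i : ℤ) - (j : ℤ)) ^ 2) := by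
  unfold gaussV
  congr 1
  obtain ⟨m, hm⟩ : ∃ m : ℕ, ((i : ℤ) - j) ^ 2 = m := ⟨(((i : ℤ) - j) ^ 2).toNat, (Int.toNat_of_nonneg (sq_nonneg _)).symm⟩
  rw [hm, zpow_natCast, ← Real.exp_nat_mul]
  congr 1
  have : ((m : ℝ)) = ((i : ℝ) - j) ^ 2 := by
    have := congrArg (fun z : ℤ => (z : ℝ)) hm
    push_cast at this
    linarith [this]
  rw [this]
  ring

lemma neville_base (σ θ δ : ℝ) (hσ : σ ≠ 0) (hθ : 0 < θ) (hδ : 0 < δ) (i j : ℕ)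
    (hi : 2 ≤ i) (hj : 2 ≤ j) :
    nevilleU σ θ δ 1 i j = Fm σ (Real.exp (-θ * δ ^ 2)) 2 i j := by
  have hσ2 : σ ^ 2 ≠ 0 := pow_ne_zero _ hσ
  have h1 : nevilleU σ θ δ 1 i j =
      gaussV σ θ δ i j - gaussV σ θ δ i 1 * gaussV σ θ δ 1 j / gaussV σ θ δ 1 1 := by
    rw [nevilleU, if_neg (by omega), if_neg (by omega)]
    rfl
  rw [h1, gaussV_eq, gaussV_eq, gaussV_eq, gaussV_eq]
  set η : ℝ := Real.exp (-θ * δ ^ 2) with hηdef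
  have hη0 : 0 < η := Real.exp_pos _
  have hη : η ≠ 0 := hη0.ne'
  have hd : ((1 : ℤ) - (1 : ℕ)) ^ 2 = 0 := by norm_num
  have hsimp : σ ^ 2 * η ^ (((1 : ℕ) : ℤ) - ((1 : ℕ) : ℤ)) ^ 2 = σ ^ 2 := by
    norm_num
  rw [hsimp]
  have hdiv : σ ^ 2 * η ^ (((i : ℤ) - (1 : ℕ)) ^ 2) * (σ ^ 2 * η ^ ((((1 : ℕ) : ℤ) - j) ^ 2)) /
      σ ^ 2 = σ ^ 2 * (η ^ (((i : ℤ) - j) ^ 2) * (η ^ 2) ^ ((i - 1) * (j - 1))) := by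
    have key := eta_sq hη 1 i j (by omega) (by omega)
    rw [div_eq_iff hσ2]
    linear_combination (σ ^ 2 * σ ^ 2) * key
  rw [hdiv]
  unfold Fm
  have hIcc : (∏ x ∈ Finset.Icc 1 (2 - 1), (1 - η ^ (2 * (j - x)))) = 1 - η ^ (2 * (j - 1)) := by
    norm_num
  rw [hIcc]
  have hsum : (∑ k ∈ Finset.range (i - 2 + 1),
      (η ^ 2) ^ (k * (j - 2) + k) * chainSum (η ^ 2) (2 - 2) k) =
      ∑ k ∈ Finset.range (i - 1), ((η ^ 2) ^ (j - 1)) ^ k := by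
    have h1' : i - 2 + 1 = i - 1 := by omega
    rw [h1']
    apply Finset.sum_congr rfl
    intro k _
    have hc : chainSum (η ^ 2) (2 - 2) k = 1 := rfl
    have he : k * (j - 2) + k = (j - 1) * k := by
      rw [show j - 1 = (j - 2) + 1 from by omega]; ring
    rw [hc, mul_one, he, pow_mul]
  rw [hsum]
  have hgeom := geom_sum_mul ((η ^ 2) ^ (j - 1)) (i - 1)
  have h2eta : η ^ (2 * (j - 1)) = (η ^ 2) ^ (j - 1) := by rw [← pow_mul]
  rw [h2eta]
  have hab : (η ^ 2) ^ ((i - 1) * (j - 1)) = ((η ^ 2) ^ (j - 1)) ^ (i - 1) := by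
    rw [Nat.mul_comm (i - 1) (j - 1), pow_mul]
  rw [hab]
  linear_combination (σ ^ 2 * η ^ (((i : ℤ) - j) ^ 2)) * hgeom

lemma neville_main (σ θ δ : ℝ) (hσ : 0 < σ) (hθ : 0 < θ) (hδ : 0 < δ) :
    ∀ t i j : ℕ, t + 2 ≤ i → t + 2 ≤ j →
      nevilleU σ θ δ (t + 1) i j = Fm σ (Real.exp (-θ * δ ^ 2)) (t + 2) i j := by
  intro t
  induction t with
  | zero => exact fun i j hi hj => neville_base σ θ δ hσ.ne' hθ hδ i j hi hj
  | succ t ih =>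
    intro i j hi hj
    have hη0 : 0 < Real.exp (-θ * δ ^ 2) := Real.exp_pos _
    have hη1 : Real.exp (-θ * δ ^ 2) < 1 := by
      rw [Real.exp_lt_one_iff]
      nlinarith [pow_pos hδ 2]
    have hrec : nevilleU σ θ δ (t + 1 + 1) i j =
        nevilleU σ θ δ (t + 1) i j -
          nevilleU σ θ δ (t + 1) i (t + 2) * nevilleU σ θ δ (t + 1) (t + 2) j /
            nevilleU σ θ δ (t + 1) (t + 2) (t + 2) := by
      rw [nevilleU, if_neg (by omega), if_neg (by omega)]
    rw [hrec, ih i j (by omega) (by omega), ih i (t + 2) (by omega) (by omega),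
      ih (t + 2) j (by omega) (by omega), ih (t + 2) (t + 2) (by omega) (by omega)]
    exact Fm_step σ (Real.exp (-θ * δ ^ 2)) hσ.ne' hη0 hη1 (by omega) hi hj

/-- Lemma, Part a (closed form for the Neville-elimination matrices): for every stage
`2 ≤ s ≤ n` and indices `s ≤ i, j ≤ n`,
`U(s)_{i,j} = σ² η^{(i-j)²} ∏_{x=1}^{s-1} (1 - η^{2(j-x)}) ·
  ∑_{k=0}^{i-s} ∑_{k₁=0}^{k} ⋯ ∑_{k_{s-2}=0}^{k_{s-3}} η^{2(k(j-s)+k+k₁+⋯+k_{s-2})}`,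
where `η = e^{-θδ²}`. -/
theorem neville_closed_form (n : ℕ) (σ θ δ : ℝ) (hn : 1 ≤ n)
    (hσ : 0 < σ) (hθ : 0 < θ) (hδ : 0 < δ) (s i j : ℕ)
    (hs2 : 2 ≤ s) (hsn : s ≤ n) (hsi : s ≤ i) (hin : i ≤ n) (hsj : s ≤ j) (hjn : j ≤ n) :
    nevilleU σ θ δ (s - 1) i j =
      σ ^ 2 * Real.exp (-θ * δ ^ 2) ^ (((i : ℤ) - (j : ℤ)) ^ 2) *
        (∏ x ∈ Finset.Icc 1 (s - 1), (1 - Real.exp (-θ * δ ^ 2) ^ (2 * (j - x)))) *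
        (∑ k ∈ Finset.range (i - s + 1),
          (Real.exp (-θ * δ ^ 2) ^ 2) ^ (k * (j - s) + k) *
            chainSum (Real.exp (-θ * δ ^ 2) ^ 2) (s - 2) k) := by
  obtain ⟨t, rfl⟩ : ∃ t, s = t + 2 := ⟨s - 2, by omega⟩
  have := neville_main σ θ δ hσ hθ hδ t i j hsi hsj
  simpa [Fm] using this
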